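/- For every LTLf formula φ in negation normal form, the formula xnf(φ) obtained by the next-normal-form transformation is semantically equivalent to φ: for every finite trace ρ and position i with 0 ≤ i < |ρ|, ρ,i ⊨ φ if and only if ρ,i ⊨ xnf(φ). -/

import Mathlib

namespace LTLfSynth

open scoped Classical

/-- LTLf formulas in negation normal form. -/
inductive LTLf (P : Type*) where
  | tt : LTLf P
  | ff : LTLf P
  | atom : P → LTLf P
  | natom : P → LTLf P
  | and : LTLf P → LTLf P → LTLf P
  | or : LTLf P → LTLf P → LTLf P
  | next : LTLf P → LTLf P
  | wnext : LTLf P → LTLf P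
  | until_ : LTLf P → LTLf P → LTLf P
  | release : LTLf P → LTLf P → LTLf P

variable {P : Type*}

/-- ◇true -/
def diamondTrue : LTLf P := .until_ .tt .tt

/-- □false -/
def boxFalse : LTLf P := .release .ff .ff

/-- Finite-trace satisfaction `ρ, i ⊨ φ`, where position `ρ.length` (and beyond)
corresponds to the empty suffix (empty-trace semantics). -/
def Sat (ρ : List (Set P)) : LTLf P → ℕ → Prop
  | .tt, _ => True
  | .ff, _ => False
  | .atom p, i => i < ρ.length ∧ p ∈ ρ.getD i ∅
  | .natom p, i => i < ρ.length ∧ p ∉ ρ.getD i ∅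
  | .and φ ψ, i => Sat ρ φ i ∧ Sat ρ ψ i
  | .or φ ψ, i => Sat ρ φ i ∨ Sat ρ ψ i
  | .next φ, i => i + 1 < ρ.length ∧ Sat ρ φ (i + 1)
  | .wnext φ, i => i + 1 < ρ.length → Sat ρ φ (i + 1)
  | .until_ φ ψ, i =>
      ∃ j, i ≤ j ∧ j < ρ.length ∧ Sat ρ ψ j ∧ ∀ k, i ≤ k → k < j → Sat ρ φ k
  | .release φ ψ, i =>
      ∀ j, i ≤ j → j < ρ.length → (Sat ρ ψ j ∨ ∃ k, i ≤ k ∧ k < j ∧ Sat ρ φ k)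

/-- The next-normal-form transformation. -/
def xnf : LTLf P → LTLf P
  | .and φ ψ => .and (xnf φ) (xnf ψ)
  | .or φ ψ => .or (xnf φ) (xnf ψ)
  | .until_ .tt .tt => .until_ .tt .tt
  | .until_ φ ψ => .or (.and (xnf ψ) diamondTrue) (.and (xnf φ) (.next (.until_ φ ψ)))
  | .release .ff .ff => .release .ff .ff
  | .release φ ψ => .and (.or (xnf ψ) boxFalse) (.or (xnf φ) (.wnext (.release φ ψ)))
  | φ => φ

lemma sat_diamondTrue (ρ : List (Set P)) (i : ℕ) (hi : i < ρ.length) :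
    Sat ρ (diamondTrue (P := P)) i :=
  ⟨i, le_refl i, hi, trivial, fun _ _ _ => trivial⟩

lemma not_sat_boxFalse (ρ : List (Set P)) (i : ℕ) (hi : i < ρ.length) :
    ¬ Sat ρ (boxFalse (P := P)) i := by
  intro h
  rcases h i (le_refl i) hi with h | ⟨k, hk1, hk2, hk3⟩
  · exact h
  · exact hk3

lemma xnf_until (φ ψ : LTLf P) (h : ¬(φ = .tt ∧ ψ = .tt)) :
    xnf (.until_ φ ψ) =
      .or (.and (xnf ψ) diamondTrue) (.and (xnf φ) (.next (.until_ φ ψ))) := by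
  cases φ <;> cases ψ <;> first | rfl | simp_all

lemma xnf_release (φ ψ : LTLf P) (h : ¬(φ = .ff ∧ ψ = .ff)) :
    xnf (.release φ ψ) =
      .and (.or (xnf ψ) boxFalse) (.or (xnf φ) (.wnext (.release φ ψ))) := by
  cases φ <;> cases ψ <;> first | rfl | simp_all

lemma sat_until_unfold (ρ : List (Set P)) (φ ψ : LTLf P) (i : ℕ) (hi : i < ρ.length) :
    Sat ρ (.until_ φ ψ) i ↔
      Sat ρ ψ i ∨ (Sat ρ φ i ∧ i + 1 < ρ.length ∧ Sat ρ (.until_ φ ψ) (i + 1)) := by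
  constructor
  · rintro ⟨j, hij, hjl, hψ, hφ⟩
    rcases eq_or_lt_of_le hij with rfl | hlt
    · exact Or.inl hψ
    · refine Or.inr ⟨hφ i (le_refl i) hlt, lt_of_le_of_lt hlt hjl,
        ⟨j, hlt, hjl, hψ, fun k hk1 hk2 => hφ k (le_of_lt (lt_of_lt_of_le (Nat.lt_succ_self i) hk1)) hk2⟩⟩
  · rintro (hψ | ⟨hφ, _, j, hij, hjl, hψ, hφ'⟩)
    · exact ⟨i, le_refl i, hi, hψ, fun k hk1 hk2 => absurd (lt_of_le_of_lt hk1 hk2) (lt_irrefl i)⟩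
    · refine ⟨j, le_trans (Nat.le_succ i) hij, hjl, hψ, fun k hk1 hk2 => ?_⟩
      rcases eq_or_lt_of_le hk1 with rfl | hlt
      · exact hφ
      · exact hφ' k hlt hk2

lemma sat_release_unfold (ρ : List (Set P)) (φ ψ : LTLf P) (i : ℕ) (hi : i < ρ.length) :
    Sat ρ (.release φ ψ) i ↔
      Sat ρ ψ i ∧ (Sat ρ φ i ∨ (i + 1 < ρ.length → Sat ρ (.release φ ψ) (i + 1))) := by
  constructor
  · intro h
    have hψ : Sat ρ ψ i := by
      rcases h i (le_refl i) hi with h' | ⟨k, hk1, hk2, _⟩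
      · exact h'
      · exact absurd (lt_of_le_of_lt hk1 hk2) (lt_irrefl i)
    refine ⟨hψ, ?_⟩
    by_cases hφ : Sat ρ φ i
    · exact Or.inl hφ
    · refine Or.inr fun _ j hij hjl => ?_
      rcases h j (le_trans (Nat.le_succ i) hij) hjl with h' | ⟨k, hk1, hk2, hk3⟩
      · exact Or.inl h'
      · rcases eq_or_lt_of_le hk1 with rfl | hlt
        · exact absurd hk3 hφ
        · exact Or.inr ⟨k, hlt, hk2, hk3⟩
  · rintro ⟨hψ, hor⟩ j hij hjl
    rcases eq_or_lt_of_le hij with rfl | hlt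
    · exact Or.inl hψ
    rcases hor with hφ | h
    · exact Or.inr ⟨i, le_refl i, hlt, hφ⟩
    · rcases h (lt_of_le_of_lt hlt hjl) j hlt hjl with h' | ⟨k, hk1, hk2, hk3⟩
      · exact Or.inl h'
      · exact Or.inr ⟨k, le_trans (Nat.le_succ i) hk1, hk2, hk3⟩

/-- `xnf(φ)` is semantically equivalent to `φ` at every position of every trace. -/
theorem xnf_semantics (φ : LTLf P) (ρ : List (Set P)) (i : ℕ) (hi : i < ρ.length) :
    Sat ρ φ i ↔ Sat ρ (xnf φ) i := by
  induction φ generalizing i with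
  | and φ ψ ihφ ihψ => simp [Sat, xnf, ihφ _ hi, ihψ _ hi]
  | or φ ψ ihφ ihψ => simp [Sat, xnf, ihφ _ hi, ihψ _ hi]
  | until_ φ ψ ihφ ihψ =>
      by_cases hc : φ = LTLf.tt ∧ ψ = LTLf.tt
      · obtain ⟨rfl, rfl⟩ := hc
        rfl
      · rw [xnf_until φ ψ hc, sat_until_unfold ρ φ ψ i hi]
        have hE : ∃ j, i ≤ j ∧ j < ρ.length := ⟨i, le_rfl, hi⟩
        simp [Sat, ← ihφ _ hi, ← ihψ _ hi, hE, sat_diamondTrue ρ i hi]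
  | release φ ψ ihφ ihψ =>
      by_cases hc : φ = LTLf.ff ∧ ψ = LTLf.ff
      · obtain ⟨rfl, rfl⟩ := hc
        rfl
      · rw [xnf_release φ ψ hc, sat_release_unfold ρ φ ψ i hi]
        have hF : ¬ ∀ j, i ≤ j → ρ.length ≤ j :=
          fun h => absurd (h i le_rfl) (not_le.mpr hi)
        simp [Sat, ← ihφ _ hi, ← ihψ _ hi, hF, not_sat_boxFalse ρ i hi]
  | _ => rfl

end LTLfSynth
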